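/- arXiv:1907.12038 — 5 statements merged into one kernel-verified Lean document; each statement's English description precedes it below -/
import Mathlib

section
/- The function t ↦ Φ(t)·e^{t²/2} is strictly decreasing on (0,∞), where Φ(t) = (2π)^{-1/2} ∫_t^∞ e^{-τ²/2} dτ. -/
open MeasureTheory

/-- The Gaussian tail function `Φ(t) = (2π)^{-1/2} ∫_t^∞ e^{-τ²/2} dτ`. -/
noncomputable def Phi (t : ℝ) : ℝ :=
  (Real.sqrt (2 * Real.pi))⁻¹ * ∫ τ in Set.Ioi t, Real.exp (-τ^2/2)

lemma gauss_integrable : MeasureTheory.Integrable (fun τ : ℝ => Real.exp (-τ^2/2)) := by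
  have := integrable_exp_neg_mul_sq (b := (2:ℝ)⁻¹) (by norm_num)
  convert this using 2 with τ
  ring_nf

lemma Phi_eq (t : ℝ) :
    Phi t = Phi 0 - (Real.sqrt (2 * Real.pi))⁻¹ * ∫ x in (0:ℝ)..t, Real.exp (-x^2/2) := by
  have hint := gauss_integrable
  have h1 : ∀ s : ℝ, (∫ τ in Set.Iic s, Real.exp (-τ^2/2)) + ∫ τ in Set.Ioi s, Real.exp (-τ^2/2)
      = ∫ τ : ℝ, Real.exp (-τ^2/2) := fun s =>
    intervalIntegral.integral_Iic_add_Ioi hint.integrableOn hint.integrableOn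
  have h2 : (∫ τ in Set.Iic t, Real.exp (-τ^2/2)) - ∫ τ in Set.Iic (0:ℝ), Real.exp (-τ^2/2)
      = ∫ x in (0:ℝ)..t, Real.exp (-x^2/2) :=
    intervalIntegral.integral_Iic_sub_Iic hint.integrableOn hint.integrableOn
  unfold Phi
  have e1 := h1 t
  have e2 := h1 0
  have : (∫ τ in Set.Ioi t, Real.exp (-τ^2/2))
      = (∫ τ in Set.Ioi (0:ℝ), Real.exp (-τ^2/2)) - ∫ x in (0:ℝ)..t, Real.exp (-x^2/2) := by
    linarith
  rw [this]; ring

lemma hasDerivAt_Phi (t : ℝ) :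
    HasDerivAt Phi (-((Real.sqrt (2 * Real.pi))⁻¹ * Real.exp (-t^2/2))) t := by
  have hcont : Continuous fun τ : ℝ => Real.exp (-τ^2/2) := by continuity
  have h : HasDerivAt (fun s => ∫ x in (0:ℝ)..s, Real.exp (-x^2/2)) (Real.exp (-t^2/2)) t :=
    intervalIntegral.integral_hasDerivAt_right (hcont.intervalIntegrable _ _)
      hcont.stronglyMeasurable.stronglyMeasurableAtFilter hcont.continuousAt
  have : HasDerivAt (fun s => Phi 0 - (Real.sqrt (2 * Real.pi))⁻¹ *
      ∫ x in (0:ℝ)..s, Real.exp (-x^2/2))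
      (-((Real.sqrt (2 * Real.pi))⁻¹ * Real.exp (-t^2/2))) t := by
    simpa using ((h.const_mul ((Real.sqrt (2 * Real.pi))⁻¹)).const_sub (Phi 0))
  exact this.congr_deriv rfl |>.congr_of_eventuallyEq (by filter_upwards with s; rw [Phi_eq s])

lemma key_bound {t : ℝ} (ht : 0 < t) :
    t * ∫ τ in Set.Ioi t, Real.exp (-τ^2/2) < Real.exp (-t^2/2) := by
  have hcont : Continuous fun τ : ℝ => Real.exp (-τ^2/2) := by continuity
  have hint : Integrable (fun τ : ℝ => τ * Real.exp (-τ^2/2)) := by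
    have := integrable_mul_exp_neg_mul_sq (b := (2:ℝ)⁻¹) (by norm_num)
    convert this using 2 with τ
    ring_nf
  have hI : (∫ τ in Set.Ioi t, τ * Real.exp (-τ^2/2)) = Real.exp (-t^2/2) := by
    have hderiv : ∀ x ∈ Set.Ici t, HasDerivAt (fun τ : ℝ => -Real.exp (-τ^2/2))
        (x * Real.exp (-x^2/2)) x := by
      intro x _
      have h1 : HasDerivAt (fun τ : ℝ => -τ^2/2) (-x) x := by
        have := ((hasDerivAt_pow 2 x).neg.div_const 2)
        refine this.congr_deriv ?_
        · push_cast; ring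
      have := (h1.exp).neg
      refine this.congr_deriv ?_
      ring
    have htend : Filter.Tendsto (fun τ : ℝ => -Real.exp (-τ^2/2)) Filter.atTop (nhds 0) := by
      rw [show (0:ℝ) = -0 by ring]
      refine (Real.tendsto_exp_atBot.comp ?_).neg
      have h2 : Filter.Tendsto (fun τ : ℝ => τ^2/2) Filter.atTop Filter.atTop :=
        (Filter.tendsto_pow_atTop (by norm_num)).atTop_div_const (by norm_num)
      have := Filter.tendsto_neg_atBot_iff.mpr h2
      refine this.congr fun τ => by ring
    have := MeasureTheory.integral_Ioi_of_hasDerivAt_of_tendsto' hderiv hint.integrableOn htend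
    simpa using this
  have hint2 : IntegrableOn (fun τ : ℝ => (τ - t) * Real.exp (-τ^2/2)) (Set.Ioi t) := by
    have h : (fun τ : ℝ => (τ - t) * Real.exp (-τ^2/2))
        = fun τ : ℝ => τ * Real.exp (-τ^2/2) - t * Real.exp (-τ^2/2) := by
      funext τ; ring
    rw [h]
    exact hint.integrableOn.sub ((gauss_integrable.const_mul t).integrableOn)
  have hpos : (0:ℝ) < ∫ τ in Set.Ioi t, (τ - t) * Real.exp (-τ^2/2) := by
    rw [setIntegral_pos_iff_support_of_nonneg_ae ?nonneg hint2]
    case nonneg =>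
      filter_upwards [ae_restrict_mem measurableSet_Ioi] with τ hτ
      have : (0:ℝ) ≤ τ - t := by simp at hτ; linarith
      positivity
    have hsub : Set.Ioi t ⊆ Function.support (fun τ : ℝ => (τ - t) * Real.exp (-τ^2/2)) := by
      intro τ hτ
      simp only [Function.mem_support]
      have h1 : (0:ℝ) < τ - t := by simp at hτ; linarith
      positivity
    have : Function.support (fun τ : ℝ => (τ - t) * Real.exp (-τ^2/2)) ∩ Set.Ioi t
        = Set.Ioi t := Set.inter_eq_self_of_subset_right hsub
    rw [this]
    simp
  have hsplit : (∫ τ in Set.Ioi t, (τ - t) * Real.exp (-τ^2/2))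
      = (∫ τ in Set.Ioi t, τ * Real.exp (-τ^2/2))
        - ∫ τ in Set.Ioi t, t * Real.exp (-τ^2/2) := by
    rw [← integral_sub hint.integrableOn ((gauss_integrable.const_mul t).integrableOn)]
    congr 1 with τ
    ring
  have hconst : (∫ τ in Set.Ioi t, t * Real.exp (-τ^2/2))
      = t * ∫ τ in Set.Ioi t, Real.exp (-τ^2/2) := integral_const_mul t _
  rw [hsplit, hI, hconst] at hpos
  linarith

theorem phi_mul_exp_strictAnti :
    StrictAntiOn (fun t => Phi t * Real.exp (t^2/2)) (Set.Ioi (0:ℝ)) := by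
  have hexp : ∀ t : ℝ, HasDerivAt (fun t : ℝ => Real.exp (t^2/2)) (t * Real.exp (t^2/2)) t := by
    intro t
    have h1 : HasDerivAt (fun τ : ℝ => τ^2/2) t t := by
      have := ((hasDerivAt_pow 2 t).div_const 2)
      refine this.congr_deriv ?_
      push_cast; ring
    simpa [mul_comm] using h1.exp
  have hG : ∀ t : ℝ, HasDerivAt (fun t => Phi t * Real.exp (t^2/2))
      (-((Real.sqrt (2*Real.pi))⁻¹ * Real.exp (-t^2/2)) * Real.exp (t^2/2)
        + Phi t * (t * Real.exp (t^2/2))) t :=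
    fun t => (hasDerivAt_Phi t).mul (hexp t)
  refine strictAntiOn_of_deriv_neg (convex_Ioi 0)
    (fun t _ => ((hG t).differentiableAt.continuousAt.continuousWithinAt)) ?_
  rw [interior_Ioi]
  intro t ht
  rw [(hG t).deriv]
  have hc : (0:ℝ) < (Real.sqrt (2*Real.pi))⁻¹ := by
    have : (0:ℝ) < Real.sqrt (2*Real.pi) := Real.sqrt_pos.mpr (by positivity)
    positivity
  have hkey := key_bound ht
  have hPhi : t * Phi t < (Real.sqrt (2*Real.pi))⁻¹ * Real.exp (-t^2/2) := by
    unfold Phi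
    calc t * ((Real.sqrt (2*Real.pi))⁻¹ * ∫ τ in Set.Ioi t, Real.exp (-τ^2/2))
        = (Real.sqrt (2*Real.pi))⁻¹ * (t * ∫ τ in Set.Ioi t, Real.exp (-τ^2/2)) := by ring
      _ < (Real.sqrt (2*Real.pi))⁻¹ * Real.exp (-t^2/2) := by
          exact mul_lt_mul_of_pos_left hkey hc
  have he : (0:ℝ) < Real.exp (t^2/2) := Real.exp_pos _
  nlinarith
end

section
/- For every β > 0, e^{t²/2} ∫_t^∞ (τ²/2)^{1/β} e^{-τ²/2} dτ is asymptotically equivalent to 2^{-1/β} t^{2/β - 1} as t → ∞; that is, the ratio of the two quantities tends to 1. -/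
open MeasureTheory Filter Set

theorem gaussian_exponential_integral_asymptotic (β : ℝ) (hβ : 0 < β) :
    Tendsto (fun t =>
      (Real.exp (t^2/2) * ∫ τ in Set.Ioi t, (τ^2/2) ^ (1/β) * Real.exp (-τ^2/2))
        / ((2:ℝ) ^ (-1/β) * t ^ (2/β - 1))) atTop (nhds 1) := by
  have hβ' : 0 < 1/β := by positivity
  set p : ℝ := 2/β - 1 with hp
  set c : ℝ := (2:ℝ) ^ (-1/β) with hc
  have hc0 : 0 < c := Real.rpow_pos_of_pos two_pos _
  set g : ℝ → ℝ := fun τ => (τ^2/2) ^ (1/β) * Real.exp (-τ^2/2) with hgdef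
  have key : ∀ x : ℝ, 0 < x → g x = c * x ^ (p+1) * Real.exp (-x^2/2) := by
    intro x hx
    have h1 : (x^2/2 : ℝ) ^ (1/β) = (x^2 : ℝ)^(1/β) * ((2:ℝ)⁻¹) ^ (1/β) := by
      rw [show (x^2/2 : ℝ) = x^2 * 2⁻¹ by ring,
        Real.mul_rpow (by positivity) (by positivity)]
    have h2 : ((2:ℝ)⁻¹) ^ (1/β) = c := by
      rw [hc, Real.inv_rpow (by norm_num), ← Real.rpow_neg (by norm_num), neg_div]
    have h3 : (x^2 : ℝ)^(1/β) = x ^ (p+1) := by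
      rw [← Real.rpow_natCast x 2, ← Real.rpow_mul hx.le]
      congr 1
      rw [hp]
      push_cast
      ring
    simp only [hgdef, h1, h2, h3]; ring
  have hgc : Continuous g := by
    apply Continuous.mul
    · apply Continuous.rpow_const (by continuity)
      intro x; exact Or.inr hβ'.le
    · exact Real.continuous_exp.comp (by continuity)
  have hInt : IntegrableOn g (Ioi 0) := by
    have h := integrableOn_rpow_mul_exp_neg_mul_sq (b := 1/2) (by norm_num)
      (s := p+1) (by
        have h0 : (0:ℝ) < 2/β := by positivity
        rw [hp]; linarith)
    have h2 : IntegrableOn (fun x : ℝ => c * (x ^ (p+1) * Real.exp (-(1/2) * x^2))) (Ioi 0) :=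
      h.const_mul c
    refine h2.congr_fun (fun x hx => ?_) measurableSet_Ioi
    rw [key x hx]
    beta_reduce; rw [show (-(1/2) * x^2 : ℝ) = -x^2/2 by ring]; ring
  set F : ℝ → ℝ := fun t => ∫ τ in Ioi t, g τ with hF
  set C : ℝ := ∫ τ in Ioi (1:ℝ), g τ with hC
  have hInt1 : IntegrableOn g (Ioi 1) := hInt.mono_set (Ioi_subset_Ioi (by norm_num))
  have hsplit : ∀ t : ℝ, 1 ≤ t → F t = C - ∫ τ in (1:ℝ)..t, g τ := by
    intro t ht
    have h2 : IntegrableOn g (Ioc 1 t) :=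
      hInt.mono_set (fun x hx => lt_of_lt_of_le one_pos hx.1.le)
    have h3 : IntegrableOn g (Ioi t) :=
      hInt.mono_set (Ioi_subset_Ioi (by linarith))
    have hdisj : Disjoint (Ioc (1:ℝ) t) (Ioi t) := by
      apply Set.disjoint_left.2
      intro x hx hx'
      exact absurd hx.2 (not_le.2 hx')
    have hu := setIntegral_union hdisj measurableSet_Ioi h2 h3 (f := g)
    rw [Ioc_union_Ioi_eq_Ioi ht] at hu
    rw [intervalIntegral.integral_of_le ht, hF, hC]
    simp only at hu ⊢
    linarith
  have hF0 : Tendsto F atTop (nhds 0) := by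
    have h := intervalIntegral_tendsto_integral_Ioi 1 hInt1 tendsto_id
    have h2 : Tendsto (fun t => C - ∫ τ in (1:ℝ)..t, g τ) atTop (nhds (C - C)) :=
      tendsto_const_nhds.sub h
    rw [sub_self] at h2
    refine h2.congr' ?_
    filter_upwards [eventually_ge_atTop (1:ℝ)] with t ht
    exact (hsplit t ht).symm
  have hFderiv : ∀ᶠ t in atTop, HasDerivAt F (-(g t)) t := by
    filter_upwards [eventually_gt_atTop (1:ℝ)] with t ht
    have hd : HasDerivAt (fun u => ∫ τ in (1:ℝ)..u, g τ) (g t) t :=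
      intervalIntegral.integral_hasDerivAt_right (hgc.intervalIntegrable 1 t)
        (hgc.stronglyMeasurableAtFilter volume (nhds t)) hgc.continuousAt
    have h2 : HasDerivAt (fun u => C - ∫ τ in (1:ℝ)..u, g τ) (-(g t)) t := hd.const_sub C
    apply h2.congr_of_eventuallyEq
    filter_upwards [Ioi_mem_nhds ht] with u hu
    exact hsplit u (le_of_lt hu)
  set G : ℝ → ℝ := fun t => c * (t ^ p * Real.exp (-t^2/2)) with hG
  set G' : ℝ → ℝ := fun t =>
    c * (p * t^(p-1) * Real.exp (-t^2/2) + t ^ p * (-t * Real.exp (-t^2/2))) with hG'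
  have hGderiv : ∀ᶠ t in atTop, HasDerivAt G (G' t) t := by
    filter_upwards [eventually_gt_atTop (0:ℝ)] with t ht
    have h1 : HasDerivAt (fun t : ℝ => t ^ p) (p * t^(p-1)) t :=
      Real.hasDerivAt_rpow_const (Or.inl ht.ne')
    have hinner : HasDerivAt (fun u : ℝ => -u^2/2) (-t) t := by
      have h := ((hasDerivAt_pow 2 t).neg).div_const 2
      refine h.congr_deriv ?_
      norm_num
      ring
    have h2 : HasDerivAt (fun t : ℝ => Real.exp (-t^2/2)) (-t * Real.exp (-t^2/2)) t := by
      have := hinner.exp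
      convert this using 1
      ring
    exact ((h1.mul h2).const_mul c)
  have hG0 : Tendsto G atTop (nhds 0) := by
    have h := rpow_mul_exp_neg_mul_sq_isLittleO_exp_neg (b := 1/2) (by norm_num) p
    have hexp : Tendsto (fun x : ℝ => Real.exp (-(1/2) * x)) atTop (nhds 0) := by
      have : Tendsto (fun x : ℝ => -(1/2) * x) atTop atBot :=
        Tendsto.const_mul_atTop_of_neg (by norm_num) tendsto_id
      exact Real.tendsto_exp_atBot.comp this
    have h2 : Tendsto (fun x : ℝ => x ^ p * Real.exp (-(1/2) * x^2)) atTop (nhds 0) :=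
      h.isBigO.trans_tendsto hexp
    have h3 : Tendsto (fun x : ℝ => c * (x ^ p * Real.exp (-(1/2) * x^2))) atTop (nhds (c * 0)) :=
      h2.const_mul c
    rw [mul_zero] at h3
    refine h3.congr fun x => ?_
    rw [hG]
    congr 2
    ring
  have hG'eq : ∀ t : ℝ, 0 < t → G' t = c * Real.exp (-t^2/2) * (t^(p-1) * (p - t^2)) := by
    intro t ht
    have h1 : t ^ p = t ^ (p-1) * t := by
      rw [← Real.rpow_add_one ht.ne' (p-1)]; ring_nf
    simp only [hG']
    rw [h1]; ring
  have hG'ne : ∀ᶠ t in atTop, G' t ≠ 0 := by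
    filter_upwards [eventually_gt_atTop (max 1 (|p|+1))] with t ht
    have ht1 : (1:ℝ) < t := lt_of_le_of_lt (le_max_left _ _) ht
    have ht0 : (0:ℝ) < t := by linarith
    have htp : p < t^2 := by
      have h1 : |p| + 1 ≤ t := le_of_lt (lt_of_le_of_lt (le_max_right _ _) ht)
      have h2 : t ≤ t^2 := by nlinarith
      have := le_abs_self p
      linarith
    rw [hG'eq t ht0]
    have hneg : t ^ (p-1) * (p - t^2) < 0 :=
      mul_neg_of_pos_of_neg (Real.rpow_pos_of_pos ht0 _) (by linarith)
    have hce : 0 < c * Real.exp (-t^2/2) := by positivity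
    exact ne_of_lt (mul_neg_of_pos_of_neg hce hneg)
  have hratio : Tendsto (fun t => (-(g t)) / G' t) atTop (nhds 1) := by
    have hbase : Tendsto (fun t : ℝ => 1 / (1 - p / t^2)) atTop (nhds 1) := by
      have ht2 : Tendsto (fun t : ℝ => t^2) atTop atTop :=
        tendsto_pow_atTop (by norm_num)
      have hp0 : Tendsto (fun t : ℝ => p / t^2) atTop (nhds 0) :=
        Tendsto.div_atTop tendsto_const_nhds ht2
      have h1 : Tendsto (fun t : ℝ => (1:ℝ) - p / t^2) atTop (nhds ((1:ℝ) - 0)) :=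
        tendsto_const_nhds.sub hp0
      have h2 : Tendsto (fun t : ℝ => (1:ℝ) / (1 - p / t^2)) atTop (nhds ((1:ℝ)/(1-0))) :=
        tendsto_const_nhds.div h1 (by norm_num)
      rw [show ((1:ℝ)/(1-0)) = 1 by norm_num] at h2
      exact h2
    refine hbase.congr' ?_
    filter_upwards [eventually_gt_atTop (max 1 (|p|+1))] with t ht
    have ht1 : (1:ℝ) < t := lt_of_le_of_lt (le_max_left _ _) ht
    have ht0 : (0:ℝ) < t := by linarith
    have htp : p < t^2 := by
      have h1 : |p| + 1 ≤ t := le_of_lt (lt_of_le_of_lt (le_max_right _ _) ht)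
      have h2 : t ≤ t^2 := by nlinarith
      have := le_abs_self p
      linarith
    have hpe : t ^ (p+1) = t ^ (p-1) * t^2 := by
      rw [← Real.rpow_natCast t 2, ← Real.rpow_add ht0]
      ring_nf
    rw [key t ht0, hG'eq t ht0, hpe]
    set E : ℝ := Real.exp (-t^2/2) with hE
    set B : ℝ := t ^ (p-1) with hB
    have hne1 : E ≠ 0 := (Real.exp_pos _).ne'
    have hne2 : B ≠ 0 := (Real.rpow_pos_of_pos ht0 _).ne'
    have hne3 : (p - t^2) ≠ 0 := sub_ne_zero_of_ne (ne_of_lt htp)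
    have hne4 : (t^2 : ℝ) ≠ 0 := by positivity
    have hrw : (1:ℝ) - p/t^2 = (t^2 - p)/t^2 := by field_simp
    have hden1 : c * E * (B * (p - t^2)) ≠ 0 :=
      mul_ne_zero (mul_ne_zero hc0.ne' hne1) (mul_ne_zero hne2 hne3)
    have hden2 : (t^2 : ℝ) - p ≠ 0 := sub_ne_zero_of_ne (ne_of_gt htp)
    rw [hrw, one_div_div, div_eq_div_iff hden2 hden1]
    ring
  have hmain := HasDerivAt.lhopital_zero_atTop hFderiv hGderiv hG'ne hF0 hG0 hratio
  refine hmain.congr' ?_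
  filter_upwards [eventually_gt_atTop (0:ℝ)] with t ht
  have h1 : Real.exp (-t^2/2) = (Real.exp (t^2/2))⁻¹ := by
    rw [← Real.exp_neg]; ring_nf
  simp only [hG]
  rw [h1]
  have hne : Real.exp (t^2/2) ≠ 0 := (Real.exp_pos _).ne'
  have hne2 : t ^ p ≠ 0 := (Real.rpow_pos_of_pos ht _).ne'
  rw [hF]
  field_simp
end

section
/- For σ > -1/2 and d > 1, the function Υ_σ(t) = ∫_d^t (τ²-1)^σ log(τ²-1) dτ is asymptotically equivalent to (2/(2σ+1)) t^{2σ+1} log t as t → ∞. -/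
open MeasureTheory Filter

lemma lhopital_integral (f g g' : ℝ → ℝ) (d : ℝ)
    (hf : ContinuousOn f (Set.Ici d))
    (hderiv : ∀ x ∈ Set.Ici d, HasDerivAt g (g' x) x)
    (hg'c : ContinuousOn g' (Set.Ici d))
    (hg'pos : ∀ x ∈ Set.Ici d, 0 < g' x)
    (hgtop : Tendsto g atTop atTop)
    (hratio : Tendsto (fun x => f x / g' x) atTop (nhds 1)) :
    Tendsto (fun t => (∫ τ in d..t, f τ) / g t) atTop (nhds 1) := by
  have hint : ∀ a b, d ≤ a → d ≤ b → IntervalIntegrable f volume a b := by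
    intro a b ha hb
    apply (hf.mono (fun x hx => le_trans (le_min ha hb) hx.1)).intervalIntegrable
  have hint' : ∀ a b, d ≤ a → d ≤ b → IntervalIntegrable g' volume a b := by
    intro a b ha hb
    apply (hg'c.mono (fun x hx => le_trans (le_min ha hb) hx.1)).intervalIntegrable
  rw [Metric.tendsto_nhds]
  intro ε hε
  set ε' := ε/3 with hε'def
  have hε' : 0 < ε' := by positivity
  have h1 : ∀ᶠ x in atTop, |f x / g' x - 1| < ε' := by
    have := Metric.tendsto_nhds.mp hratio ε' hε'
    simpa [Real.dist_eq] using this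
  obtain ⟨T, hT⟩ := eventually_atTop.mp (h1.and (eventually_ge_atTop d))
  have hTd : d ≤ T := (hT T le_rfl).2
  have hbound : ∀ x, T ≤ x → (1-ε') * g' x ≤ f x ∧ f x ≤ (1+ε') * g' x := by
    intro x hx
    have hxd : d ≤ x := le_trans hTd hx
    have hg'x := hg'pos x hxd
    have h := (hT x hx).1
    have heq : f x - g' x = (f x / g' x - 1) * g' x := by field_simp
    have habs : |f x - g' x| ≤ ε' * g' x := by
      rw [heq, abs_mul, abs_of_pos hg'x]
      exact mul_le_mul_of_nonneg_right h.le hg'x.le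
    rw [abs_le] at habs
    constructor <;> nlinarith [habs.1, habs.2]
  have hftc : ∀ t, T ≤ t → ∫ x in T..t, g' x = g t - g T := by
    intro t ht
    apply intervalIntegral.integral_eq_sub_of_hasDerivAt
    · intro x hx
      rw [Set.uIcc_of_le ht] at hx
      exact hderiv x (le_trans hTd hx.1)
    · exact hint' T t hTd (hTd.trans ht)
  set C := ∫ τ in d..T, f τ with hC
  have key : ∀ t, T ≤ t →
      C + (1-ε')*(g t - g T) ≤ (∫ τ in d..t, f τ) ∧
      (∫ τ in d..t, f τ) ≤ C + (1+ε')*(g t - g T) := by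
    intro t ht
    have htd : d ≤ t := hTd.trans ht
    have hsplit : (∫ τ in d..t, f τ) = C + ∫ τ in T..t, f τ := by
      rw [hC, intervalIntegral.integral_add_adjacent_intervals (hint d T le_rfl hTd)
        (hint T t hTd htd)]
    have hiT := hint T t hTd htd
    have hiT' := hint' T t hTd htd
    constructor
    · have : (1-ε') * (g t - g T) ≤ ∫ τ in T..t, f τ := by
        calc (1-ε') * (g t - g T) = ∫ τ in T..t, (1-ε') * g' τ := by
              rw [intervalIntegral.integral_const_mul, hftc t ht]
          _ ≤ ∫ τ in T..t, f τ := by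
              apply intervalIntegral.integral_mono_on ht (hiT'.const_mul _) hiT
              exact fun x hx => (hbound x hx.1).1
      linarith [hsplit]
    · have : (∫ τ in T..t, f τ) ≤ (1+ε') * (g t - g T) := by
        calc (∫ τ in T..t, f τ) ≤ ∫ τ in T..t, (1+ε') * g' τ := by
              apply intervalIntegral.integral_mono_on ht hiT (hiT'.const_mul _)
              exact fun x hx => (hbound x hx.1).2
          _ = (1+ε') * (g t - g T) := by
              rw [intervalIntegral.integral_const_mul, hftc t ht]
      linarith [hsplit]
  set K := |C| + (1+ε') * |g T| with hK
  have hKg : Tendsto (fun t => K / g t) atTop (nhds 0) := tendsto_const_nhds.div_atTop hgtop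
  have hev : ∀ᶠ t in atTop, T ≤ t ∧ 0 < g t ∧ K / g t < ε' := by
    filter_upwards [eventually_ge_atTop T, hgtop.eventually_gt_atTop 0,
      hKg.eventually (eventually_lt_nhds hε')] with t h1 h2 h3
    exact ⟨h1, h2, h3⟩
  filter_upwards [hev] with t ⟨ht, hgt, hKt⟩
  rw [Real.dist_eq, abs_lt]
  obtain ⟨hlo, hhi⟩ := key t ht
  have hKt' : K < ε' * g t := (div_lt_iff₀ hgt).mp hKt
  have habs1 : C ≤ |C| := le_abs_self C
  have habs2 : -|C| ≤ C := neg_abs_le C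
  have habs3 : g T ≤ |g T| := le_abs_self _
  have habs4 : -|g T| ≤ g T := neg_abs_le _
  constructor
  · have h2 : 1 - ε < (∫ τ in d..t, f τ) / g t := by
      rw [lt_div_iff₀ hgt]
      nlinarith
    linarith
  · have h2 : (∫ τ in d..t, f τ) / g t < 1 + ε := by
      rw [div_lt_iff₀ hgt]
      nlinarith
    linarith

lemma Upsilon_ratio (σ : ℝ) (hσ : -(1/2) < σ) :
    Tendsto (fun x : ℝ => ((x^2 - 1) ^ σ * Real.log (x^2 - 1)) /
      (2 * x ^ (2*σ) * Real.log x + (2/(2*σ+1)) * x ^ (2*σ))) atTop (nhds 1) := by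
  have hs : (0:ℝ) < 2*σ+1 := by linarith
  set c : ℝ := 2/(2*σ+1) with hc
  have h1 : Tendsto (fun x : ℝ => (x^2-1)/x^2) atTop (nhds 1) := by
    have h2 : Tendsto (fun x : ℝ => 1 - (x^2)⁻¹) atTop (nhds 1) := by
      have := (tendsto_pow_atTop (n := 2) two_ne_zero).inv_tendsto_atTop (α := ℝ)
      simpa using tendsto_const_nhds.sub this
    apply h2.congr'
    filter_upwards [eventually_gt_atTop (0:ℝ)] with x hx
    have : x^2 ≠ 0 := by positivity
    field_simp
  have hA : Tendsto (fun x : ℝ => ((x^2-1)/x^2) ^ σ) atTop (nhds 1) := by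
    have hcont : ContinuousAt (fun y : ℝ => y ^ σ) 1 :=
      (Real.continuousAt_rpow_const 1 σ (Or.inl one_ne_zero))
    simpa [Real.one_rpow, Function.comp_def] using hcont.tendsto.comp h1
  have hu : Tendsto (fun x : ℝ => Real.log ((x^2-1)/x^2)) atTop (nhds 0) := by
    have hcont : ContinuousAt Real.log 1 := Real.continuousAt_log one_ne_zero
    simpa [Function.comp_def] using hcont.tendsto.comp h1
  have hB : Tendsto (fun x : ℝ =>
      (2 * Real.log x + Real.log ((x^2-1)/x^2)) / (2 * Real.log x + c)) atTop (nhds 1) := by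
    have hden : Tendsto (fun x : ℝ => 2 * Real.log x + c) atTop atTop :=
      (Real.tendsto_log_atTop.const_mul_atTop two_pos).atTop_add tendsto_const_nhds
    have hsmall : Tendsto (fun x : ℝ => (Real.log ((x^2-1)/x^2) - c) / (2 * Real.log x + c))
        atTop (nhds 0) := (hu.sub tendsto_const_nhds).div_atTop hden
    have h2 : Tendsto (fun x : ℝ => 1 + (Real.log ((x^2-1)/x^2) - c) / (2 * Real.log x + c))
        atTop (nhds 1) := by
      simpa using (tendsto_const_nhds (x := (1:ℝ)) (f := atTop)).add hsmall
    apply h2.congr'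
    filter_upwards [hden.eventually_gt_atTop 0] with x hx
    have hne : 2 * Real.log x + c ≠ 0 := ne_of_gt hx
    field_simp
    ring
  have := hA.mul hB
  rw [one_mul] at this
  apply this.congr'
  filter_upwards [eventually_gt_atTop (1:ℝ)] with x hx
  have hx0 : (0:ℝ) < x := lt_trans one_pos hx
  have hx2 : (0:ℝ) < x^2 - 1 := by nlinarith
  have hxp : (0:ℝ) < x ^ (2*σ) := Real.rpow_pos_of_pos hx0 _
  have hsq : (x^2 : ℝ) ^ σ = x ^ (2*σ) := by
    rw [← Real.rpow_natCast x 2, ← Real.rpow_mul hx0.le]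
    norm_num
  have hlog : Real.log (x^2 - 1) = 2 * Real.log x + Real.log ((x^2-1)/x^2) := by
    rw [Real.log_div (ne_of_gt hx2) (by positivity), Real.log_pow]
    push_cast
    ring
  have hdiv : ((x^2-1)/x^2 : ℝ) ^ σ = (x^2-1) ^ σ / x ^ (2*σ) := by
    rw [Real.div_rpow hx2.le (by positivity), hsq]
  rw [hdiv, hlog]
  have hden2 : 2 * x ^ (2*σ) * Real.log x + c * x ^ (2*σ) =
      x ^ (2*σ) * (2 * Real.log x + c) := by ring
  rw [hden2]
  rw [div_mul_div_comm]

theorem Upsilon_asymptotic (σ d : ℝ) (hσ : -(1/2) < σ) (hd : 1 < d) :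
    Tendsto (fun t =>
      (∫ τ in d..t, (τ^2 - 1) ^ σ * Real.log (τ^2 - 1))
        / ((2 / (2*σ + 1)) * t ^ (2*σ + 1) * Real.log t)) atTop (nhds 1) := by
  have hs : (0:ℝ) < 2*σ+1 := by linarith
  set c : ℝ := 2/(2*σ+1) with hc
  have hcpos : 0 < c := div_pos two_pos hs
  have hpos : ∀ x ∈ Set.Ici d, (0:ℝ) < x := fun x hx => lt_trans one_pos (lt_of_lt_of_le hd hx)
  have hone : ∀ x ∈ Set.Ici d, (1:ℝ) < x := fun x hx => lt_of_lt_of_le hd hx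
  have hsq : ∀ x ∈ Set.Ici d, (0:ℝ) < x^2 - 1 := by
    intro x hx; have := hone x hx; nlinarith
  -- continuity of f
  have hc1 : ContinuousOn (fun τ : ℝ => τ^2 - 1) (Set.Ici d) :=
    (continuous_pow 2).continuousOn.sub continuousOn_const
  have hf : ContinuousOn (fun τ : ℝ => (τ^2 - 1) ^ σ * Real.log (τ^2 - 1)) (Set.Ici d) :=
    (hc1.rpow_const (fun x hx => Or.inl (ne_of_gt (hsq x hx)))).mul
      (hc1.log (fun x hx => ne_of_gt (hsq x hx)))
  -- continuity of g'
  have hcr : ContinuousOn (fun x : ℝ => x ^ (2*σ)) (Set.Ici d) :=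
    continuousOn_id.rpow_const (fun x hx => Or.inl (ne_of_gt (hpos x hx)))
  have hg'c : ContinuousOn (fun x : ℝ => 2 * x ^ (2*σ) * Real.log x + c * x ^ (2*σ))
      (Set.Ici d) :=
    (((continuousOn_const.mul hcr).mul
      (Real.continuousOn_log.mono (fun x hx => ne_of_gt (hpos x hx)))).add
      (continuousOn_const.mul hcr))
  -- derivative
  have hderiv : ∀ x ∈ Set.Ici d,
      HasDerivAt (fun t : ℝ => c * t ^ (2*σ+1) * Real.log t)
        (2 * x ^ (2*σ) * Real.log x + c * x ^ (2*σ)) x := by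
    intro x hx
    have hx0 := hpos x hx
    have h1 : HasDerivAt (fun t : ℝ => t ^ (2*σ+1)) ((2*σ+1) * x ^ (2*σ+1-1)) x :=
      Real.hasDerivAt_rpow_const (Or.inl hx0.ne')
    have h2 : HasDerivAt Real.log x⁻¹ x := Real.hasDerivAt_log hx0.ne'
    have h3 := (h1.const_mul c).mul h2
    refine h3.congr_deriv ?_
    symm
    have e1 : x ^ (2*σ+1) = x ^ (2*σ) * x := by
      rw [Real.rpow_add hx0, Real.rpow_one]
    have e2 : x ^ (2*σ+1-1) = x ^ (2*σ) := by norm_num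
    rw [e1, e2, hc]
    field_simp
  -- positivity of g'
  have hg'pos : ∀ x ∈ Set.Ici d,
      (0:ℝ) < 2 * x ^ (2*σ) * Real.log x + c * x ^ (2*σ) := by
    intro x hx
    have hrp : (0:ℝ) < x ^ (2*σ) := Real.rpow_pos_of_pos (hpos x hx) _
    have hlp : (0:ℝ) < Real.log x := Real.log_pos (hone x hx)
    have := mul_pos (mul_pos two_pos hrp) hlp
    have := mul_pos hcpos hrp
    linarith
  -- g tends to atTop
  have hgtop : Tendsto (fun t : ℝ => c * t ^ (2*σ+1) * Real.log t) atTop atTop := by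
    have h1 : Tendsto (fun t : ℝ => t ^ (2*σ+1)) atTop atTop := tendsto_rpow_atTop hs
    have h3 := h1.atTop_mul_atTop₀ Real.tendsto_log_atTop
    have := h3.const_mul_atTop hcpos
    simpa [mul_assoc] using this
  have hratio := Upsilon_ratio σ hσ
  exact lhopital_integral (fun τ => (τ^2 - 1) ^ σ * Real.log (τ^2 - 1))
    (fun t => c * t ^ (2*σ+1) * Real.log t)
    (fun x => 2 * x ^ (2*σ) * Real.log x + c * x ^ (2*σ)) d
    hf hderiv hg'c hg'pos hgtop hratio
end

section
/- Let β > 0 and N > 0, and let B be a Young function with B(t) = N e^{t^β} for all large t, so that B^{-1}(r) = (log(r/N))^{1/β} for large r. Then, as t → ∞, B^{-1}(1/Φ(t)) = 2^{-1/β} t^{2/β} + (2/β) 2^{-1/β} t^{2/β - 2} log t + o(t^{2/β-2} log t), where Φ is the Gaussian tail function. -/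
open MeasureTheory Filter Set Topology

lemma tendsto_exp_neg_sq : Tendsto (fun τ : ℝ => Real.exp (-τ^2/2)) atTop (nhds 0) := by
  apply Real.tendsto_exp_atBot.comp
  apply tendsto_atBot_mono' atTop ?_ tendsto_neg_atTop_atBot
  filter_upwards [eventually_ge_atTop 2] with τ hτ
  nlinarith

lemma ftc1 (t : ℝ) (ht : 0 < t) :
    (∫ τ in Set.Ioi t, τ * Real.exp (-τ^2/2)) = Real.exp (-t^2/2) := by
  have hderiv : ∀ x ∈ Set.Ici t, HasDerivAt (fun τ : ℝ => -Real.exp (-τ^2/2))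
      (x * Real.exp (-x^2/2)) x := by
    intro x _
    have h : HasDerivAt (fun τ : ℝ => -τ^2/2) (-x) x := by
      have := ((hasDerivAt_pow 2 x).neg).div_const 2
      exact this.congr_deriv (by ring)
    have := (h.exp).neg
    exact this.congr_deriv (by ring)
  have hnonneg : ∀ x ∈ Set.Ioi t, 0 ≤ x * Real.exp (-x^2/2) := fun x hx =>
    mul_nonneg (le_of_lt (ht.trans hx)) (Real.exp_pos _).le
  have htend : Tendsto (fun τ : ℝ => -Real.exp (-τ^2/2)) atTop (nhds 0) := by
    simpa using tendsto_exp_neg_sq.neg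
  have hint := integrableOn_Ioi_deriv_of_nonneg
      ((hderiv t (le_refl t)).continuousAt.continuousWithinAt) (fun x hx => hderiv x (Ioi_subset_Ici_self hx))
      hnonneg htend
  have := integral_Ioi_of_hasDerivAt_of_tendsto'
      hderiv hint htend
  simpa using this

lemma ftc2 (t : ℝ) (ht : 0 < t) :
    (∫ τ in Set.Ioi t, Real.exp (-τ^2/2) * (1 + 1/τ^2)) = Real.exp (-t^2/2) / t := by
  have hderiv : ∀ x ∈ Set.Ici t, HasDerivAt (fun τ : ℝ => -(Real.exp (-τ^2/2) * τ⁻¹))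
      (Real.exp (-x^2/2) * (1 + 1/x^2)) x := by
    intro x hx
    have hx0 : x ≠ 0 := (ht.trans_le hx).ne'
    have h : HasDerivAt (fun τ : ℝ => -τ^2/2) (-x) x := by
      have := ((hasDerivAt_pow 2 x).neg).div_const 2
      exact this.congr_deriv (by ring)
    have hinv : HasDerivAt (fun τ : ℝ => τ⁻¹) (-(x^2)⁻¹) x := by
      simpa using (hasDerivAt_inv hx0)
    have := ((h.exp).mul hinv).neg
    exact this.congr_deriv (by field_simp; ring)
  have hnonneg : ∀ x ∈ Set.Ioi t, 0 ≤ Real.exp (-x^2/2) * (1 + 1/x^2) := fun x hx => by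
    positivity
  have htend : Tendsto (fun τ : ℝ => -(Real.exp (-τ^2/2) * τ⁻¹)) atTop (nhds 0) := by
    have := (tendsto_exp_neg_sq.mul tendsto_inv_atTop_zero).neg
    simpa using this
  have hint := integrableOn_Ioi_deriv_of_nonneg
      ((hderiv t (le_refl t)).continuousAt.continuousWithinAt) (fun x hx => hderiv x (Ioi_subset_Ici_self hx))
      hnonneg htend
  have := integral_Ioi_of_hasDerivAt_of_tendsto' hderiv hint htend
  rw [this]
  field_simp
  ring

lemma integrable_gauss_Ioi (t : ℝ) : IntegrableOn (fun τ : ℝ => Real.exp (-τ^2/2)) (Set.Ioi t) := by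
  have : (fun τ : ℝ => Real.exp (-τ^2/2)) = fun τ : ℝ => Real.exp (-(1/2) * τ^2) := by
    funext τ; ring_nf
  rw [this]
  exact (integrable_exp_neg_mul_sq (by norm_num)).integrableOn

lemma gauss_upper (t : ℝ) (ht : 0 < t) :
    (∫ τ in Set.Ioi t, Real.exp (-τ^2/2)) ≤ Real.exp (-t^2/2) / t := by
  have h1 : (∫ τ in Set.Ioi t, Real.exp (-τ^2/2)) ≤ ∫ τ in Set.Ioi t, (τ/t) * Real.exp (-τ^2/2) := by
    apply setIntegral_mono_on (integrable_gauss_Ioi t)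
    · have hmul : IntegrableOn (fun τ : ℝ => τ * Real.exp (-τ^2/2)) (Set.Ioi t) := by
        have : (fun τ : ℝ => τ * Real.exp (-τ^2/2)) = fun τ : ℝ => τ * Real.exp (-(1/2) * τ^2) := by
          funext τ; ring_nf
        rw [this]
        exact (integrable_mul_exp_neg_mul_sq (by norm_num)).integrableOn
      have heq : (fun τ : ℝ => (τ/t) * Real.exp (-τ^2/2))
          = fun τ : ℝ => (τ * Real.exp (-τ^2/2)) * t⁻¹ := by funext τ; ring
      rw [heq]
      exact hmul.mul_const _
    · exact measurableSet_Ioi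
    · intro x hx
      have h1 : 1 ≤ x / t := (one_le_div ht).mpr (le_of_lt hx)
      nlinarith [Real.exp_pos (-x^2/2)]
  have h2 : (∫ τ in Set.Ioi t, (τ/t) * Real.exp (-τ^2/2)) = Real.exp (-t^2/2) / t := by
    have heq : (fun τ : ℝ => (τ/t) * Real.exp (-τ^2/2))
        = fun τ : ℝ => (τ * Real.exp (-τ^2/2)) * t⁻¹ := by funext τ; ring
    rw [heq, integral_mul_const, ftc1 t ht, div_eq_mul_inv]
    ring
  linarith

lemma gauss_lower (t : ℝ) (ht : 0 < t) :
    Real.exp (-t^2/2) * (t/(t^2+1)) ≤ ∫ τ in Set.Ioi t, Real.exp (-τ^2/2) := by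
  have hI : IntegrableOn (fun τ : ℝ => Real.exp (-τ^2/2) * (1 + 1/τ^2)) (Set.Ioi t) := by
    have hderiv : ∀ x ∈ Set.Ici t, HasDerivAt (fun τ : ℝ => -(Real.exp (-τ^2/2) * τ⁻¹))
        (Real.exp (-x^2/2) * (1 + 1/x^2)) x := by
      intro x hx
      have hx0 : x ≠ 0 := (ht.trans_le hx).ne'
      have h : HasDerivAt (fun τ : ℝ => -τ^2/2) (-x) x := by
        have := ((hasDerivAt_pow 2 x).neg).div_const 2
        exact this.congr_deriv (by ring)
      have hinv : HasDerivAt (fun τ : ℝ => τ⁻¹) (-(x^2)⁻¹) x := by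
        simpa using (hasDerivAt_inv hx0)
      have := ((h.exp).mul hinv).neg
      exact this.congr_deriv (by field_simp; ring)
    have htend : Tendsto (fun τ : ℝ => -(Real.exp (-τ^2/2) * τ⁻¹)) atTop (nhds 0) := by
      have := (tendsto_exp_neg_sq.mul tendsto_inv_atTop_zero).neg
      simpa using this
    exact integrableOn_Ioi_deriv_of_nonneg
      ((hderiv t (le_refl t)).continuousAt.continuousWithinAt) (fun x hx => hderiv x (Ioi_subset_Ici_self hx))
      (fun x hx => by positivity) htend
  have h1 : (∫ τ in Set.Ioi t, (t^2/(t^2+1)) * (Real.exp (-τ^2/2) * (1 + 1/τ^2)))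
      ≤ ∫ τ in Set.Ioi t, Real.exp (-τ^2/2) := by
    apply setIntegral_mono_on (hI.const_mul _) (integrable_gauss_Ioi t) measurableSet_Ioi
    intro x hx
    have hx0 : 0 < x := ht.trans hx
    have hle : 1/x^2 ≤ 1/t^2 := by
      apply one_div_le_one_div_of_le (by positivity)
      nlinarith [le_of_lt (mem_Ioi.mp hx)]
    rw [mul_comm (t^2/(t^2+1)), mul_assoc]
    have : (1 + 1/x^2) * (t^2/(t^2+1)) ≤ 1 := by
      have h' : (1 + 1/x^2) * (t^2/(t^2+1)) ≤ (1 + 1/t^2) * (t^2/(t^2+1)) :=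
        mul_le_mul_of_nonneg_right (by linarith) (by positivity)
      have heq : (1 + 1/t^2) * (t^2/(t^2+1)) = 1 := by field_simp
      linarith
    nlinarith [Real.exp_pos (-x^2/2), Real.exp_pos (-x^2/2)]
  have h2 : (∫ τ in Set.Ioi t, (t^2/(t^2+1)) * (Real.exp (-τ^2/2) * (1 + 1/τ^2)))
      = Real.exp (-t^2/2) * (t/(t^2+1)) := by
    rw [integral_const_mul, ftc2 t ht]
    field_simp
  linarith

lemma G_pos (t : ℝ) (ht : 0 < t) : 0 < ∫ τ in Set.Ioi t, Real.exp (-τ^2/2) :=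
  lt_of_lt_of_le (by positivity) (gauss_lower t ht)

lemma hlog : Tendsto (fun t : ℝ =>
    Real.log (∫ τ in Set.Ioi t, Real.exp (-τ^2/2)) + t^2/2 + Real.log t) atTop (nhds 0) := by
  have hsq : Tendsto (fun t : ℝ => t * (∫ τ in Set.Ioi t, Real.exp (-τ^2/2)) * Real.exp (t^2/2))
      atTop (nhds 1) := by
    apply tendsto_of_tendsto_of_tendsto_of_le_of_le' (g := fun t : ℝ => t^2/(t^2+1))
        (h := fun _ : ℝ => (1:ℝ))
    · have h1 : Tendsto (fun t : ℝ => 1 - 1/(t^2+1)) atTop (nhds 1) := by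
        have h2 : Tendsto (fun t : ℝ => 1/(t^2+1)) atTop (nhds 0) := by
          simp only [one_div]
          apply tendsto_inv_atTop_zero.comp
          apply Filter.tendsto_atTop_add_const_right
          exact tendsto_pow_atTop (by norm_num)
        simpa using (tendsto_const_nhds.sub h2)
      convert h1 using 2 with t
      by_cases h : t^2 + 1 = 0
      · nlinarith [sq_nonneg t]
      · field_simp; ring
    · exact tendsto_const_nhds
    · filter_upwards [eventually_gt_atTop (0:ℝ)] with t ht
      have := gauss_lower t ht
      have he : 0 < Real.exp (t^2/2) := Real.exp_pos _
      have hexp : Real.exp (-t^2/2) * Real.exp (t^2/2) = 1 := by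
        rw [← Real.exp_add, neg_div]; simp
      calc t^2/(t^2+1) = (Real.exp (-t^2/2) * (t/(t^2+1))) * Real.exp (t^2/2) * t := by
            rw [mul_comm (Real.exp (-t^2/2)), mul_assoc, mul_assoc]
            rw [show Real.exp (-t^2/2) * (Real.exp (t^2/2) * t) = (Real.exp (-t^2/2) * Real.exp (t^2/2)) * t by ring, hexp]
            field_simp
        _ ≤ (∫ τ in Set.Ioi t, Real.exp (-τ^2/2)) * Real.exp (t^2/2) * t := by
            apply mul_le_mul_of_nonneg_right _ ht.le
            exact mul_le_mul_of_nonneg_right this he.le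
        _ = t * (∫ τ in Set.Ioi t, Real.exp (-τ^2/2)) * Real.exp (t^2/2) := by ring
    · filter_upwards [eventually_gt_atTop (0:ℝ)] with t ht
      have := gauss_upper t ht
      have he : 0 < Real.exp (t^2/2) := Real.exp_pos _
      have hexp : Real.exp (-t^2/2) * Real.exp (t^2/2) = 1 := by
        rw [← Real.exp_add, neg_div]; simp
      calc t * (∫ τ in Set.Ioi t, Real.exp (-τ^2/2)) * Real.exp (t^2/2)
          ≤ t * (Real.exp (-t^2/2)/t) * Real.exp (t^2/2) := by
            apply mul_le_mul_of_nonneg_right _ he.le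
            exact mul_le_mul_of_nonneg_left this ht.le
        _ = 1 := by
            field_simp
            rw [mul_comm, neg_div] at hexp
            linarith [hexp]
  have hlog1 := hsq.log one_ne_zero
  rw [Real.log_one] at hlog1
  apply hlog1.congr'
  filter_upwards [eventually_gt_atTop (0:ℝ)] with t ht
  have hG := G_pos t ht
  rw [Real.log_mul (by positivity) (Real.exp_pos _).ne', Real.log_mul ht.ne' hG.ne',
    Real.log_exp]
  ring

lemma philog : Tendsto (fun t : ℝ => -Real.log (Phi t) - t^2/2 - Real.log t) atTop
    (nhds (Real.log (Real.sqrt (2*Real.pi)))) := by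
  have hc : 0 < Real.sqrt (2*Real.pi) := Real.sqrt_pos.mpr (by positivity)
  have h := (tendsto_const_nhds (x := Real.log (Real.sqrt (2*Real.pi))) (f := atTop)).sub hlog
  rw [sub_zero] at h
  apply h.congr'
  filter_upwards [eventually_gt_atTop (0:ℝ)] with t ht
  have hG := G_pos t ht
  unfold Phi
  rw [Real.log_mul (by positivity) hG.ne', Real.log_inv]
  ring

lemma Phi_pos (t : ℝ) (ht : 0 < t) : 0 < Phi t := by
  unfold Phi
  have := G_pos t ht
  positivity

theorem Binv_phi_asymptotic (β N t₀ : ℝ) (hβ : 0 < β) (hN : 0 < N) (ht₀ : 0 < t₀)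
    (B Binv : ℝ → ℝ)
    (hBconv : ConvexOn ℝ (Set.Ici 0) B) (hB0 : B 0 = 0)
    (hBform : ∀ t > t₀, B t = N * Real.exp (t ^ β))
    (hBinv : ∀ r > N * Real.exp (t₀ ^ β), Binv r = (Real.log (r / N)) ^ (1/β)) :
    Tendsto (fun t =>
      (Binv (1 / Phi t) - (2:ℝ) ^ (-1/β) * t ^ (2/β))
        / ((2/β) * (2:ℝ) ^ (-1/β) * t ^ (2/β - 2) * Real.log t)) atTop (nhds 1) := by
  have hβ' : β ≠ 0 := hβ.ne'
  set p : ℝ := 1/β with hp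
  set c : ℝ := Real.log (Real.sqrt (2*Real.pi)) with hc
  set g : ℝ → ℝ := fun t => -Real.log (Phi t) - t^2/2 - Real.log t with hg
  have hgc : Tendsto g atTop (nhds c) := philog
  set E : ℝ → ℝ := fun t => Real.log t + g t - Real.log N with hE
  set u : ℝ → ℝ := fun t => 2 * E t / t^2 with hu
  -- E t / log t → 1
  have hloginv : Tendsto (fun t : ℝ => 1 / Real.log t) atTop (nhds 0) := by
    simp only [one_div]
    exact tendsto_inv_atTop_zero.comp Real.tendsto_log_atTop
  have hElog : Tendsto (fun t => E t / Real.log t) atTop (nhds 1) := by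
    have h1 : Tendsto (fun t => 1 + (g t - Real.log N) * (1 / Real.log t)) atTop (nhds 1) := by
      have := ((hgc.sub_const (Real.log N)).mul hloginv)
      rw [mul_zero] at this
      simpa using (tendsto_const_nhds (x := (1:ℝ)) (f := atTop)).add this
    apply h1.congr'
    filter_upwards [eventually_gt_atTop (1:ℝ)] with t ht
    have hlt : 0 < Real.log t := Real.log_pos ht
    field_simp [hE]
    ring
  -- E → ∞
  have hEtop : Tendsto E atTop atTop := by
    have h := Real.tendsto_log_atTop.atTop_add (hgc.sub_const (Real.log N))
    exact Tendsto.congr (fun t => by simp only [hE]; ring) h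
  -- u → 0
  have hlogdiv : Tendsto (fun t : ℝ => Real.log t / t^2) atTop (nhds 0) := by
    have hlt : Tendsto (fun x : ℝ => Real.log x / x) atTop (nhds 0) := by
      have := Real.tendsto_pow_log_div_mul_add_atTop 1 0 1 one_ne_zero
      simpa using this
    have h1 := hlt.mul tendsto_inv_atTop_zero
    rw [mul_zero] at h1
    apply h1.congr'
    filter_upwards [eventually_gt_atTop (0:ℝ)] with t ht
    rw [pow_two, ← div_div]
    exact (div_eq_mul_inv _ _).symm
  have hu0 : Tendsto u atTop (nhds 0) := by
    have h1 : Tendsto (fun t => 2 * ((E t / Real.log t) * (Real.log t / t^2))) atTop (nhds 0) := by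
      have := hElog.mul hlogdiv
      rw [mul_zero] at this
      simpa using (tendsto_const_nhds (x := (2:ℝ)) (f := atTop)).mul this
    apply h1.congr'
    filter_upwards [eventually_gt_atTop (1:ℝ)] with t ht
    have hlt : 0 < Real.log t := Real.log_pos ht
    have ht0 : (0:ℝ) < t := lt_trans one_pos ht
    simp only [hu]
    field_simp
  have hEposEv : ∀ᶠ t in atTop, 0 < E t := hEtop.eventually_gt_atTop 0
  have huposEv : ∀ᶠ t in atTop, 0 < u t := by
    filter_upwards [hEposEv, eventually_gt_atTop (0:ℝ)] with t h1 h2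
    simp only [hu]; positivity
  -- slope limit
  have hQ : Tendsto (fun t => ((1 + u t) ^ p - 1) / u t) atTop (nhds p) := by
    have hd : HasDerivAt (fun x : ℝ => x ^ p) p 1 := by
      have := Real.hasDerivAt_rpow_const (x := (1:ℝ)) (p := p) (Or.inl one_ne_zero)
      simpa using this
    have hslope := hasDerivAt_iff_tendsto_slope.mp hd
    have h1u : Tendsto (fun t => 1 + u t) atTop (𝓝[≠] (1:ℝ)) := by
      rw [tendsto_nhdsWithin_iff]
      constructor
      · simpa using (tendsto_const_nhds (x := (1:ℝ)) (f := atTop)).add hu0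
      · filter_upwards [huposEv] with t ht
        simp only [Set.mem_compl_iff, Set.mem_singleton_iff]
        intro h
        nlinarith [ht]
    have := hslope.comp h1u
    apply this.congr'
    filter_upwards [huposEv] with t ht
    simp only [Function.comp_apply, slope_def_field]
    rw [Real.one_rpow]
    congr 1
    ring
  -- main eventual equality
  have hmain : Tendsto (fun t => (((1 + u t) ^ p - 1) / u t) * (β * (E t / Real.log t)))
      atTop (nhds 1) := by
    have := hQ.mul (((tendsto_const_nhds (x := β) (f := atTop)).mul hElog))
    rw [mul_one] at this
    have hpb : p * β = 1 := by rw [hp]; field_simp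
    simpa [hpb, mul_comm] using this
  apply hmain.congr'
  -- eventual facts
  have hPhiPos : ∀ᶠ t in atTop, 0 < Phi t := by
    filter_upwards [eventually_gt_atTop (0:ℝ)] with t ht using Phi_pos t ht
  have hBigEv : ∀ᶠ t in atTop, N * Real.exp (t₀ ^ β) < 1 / Phi t := by
    have hatTop : Tendsto (fun t => -Real.log (Phi t)) atTop atTop := by
      have h1 : Tendsto (fun t : ℝ => t^2/2 + Real.log t) atTop atTop :=
        Tendsto.zero_eventuallyLE_add_atTop (Eventually.of_forall (fun t => by simp only [Pi.zero_apply]; positivity))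
          Real.tendsto_log_atTop
      have h2 : Tendsto (fun t => t^2/2 + Real.log t + g t) atTop atTop := h1.atTop_add hgc
      apply h2.congr
      intro t
      simp only [hg]; ring
    filter_upwards [hatTop.eventually_gt_atTop (Real.log N + t₀ ^ β), hPhiPos] with t hgt hpos
    have h1 : 1 / Phi t = Real.exp (-Real.log (Phi t)) := by
      rw [Real.exp_neg, Real.exp_log hpos, one_div]
    have h2 : N * Real.exp (t₀ ^ β) = Real.exp (Real.log N + t₀ ^ β) := by
      rw [Real.exp_add, Real.exp_log hN]
    rw [h1, h2]
    exact Real.exp_lt_exp.mpr hgt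
  filter_upwards [hPhiPos, hBigEv, hEposEv, huposEv, eventually_gt_atTop (1:ℝ)]
    with t hpos hbig hEpos hupos ht1
  have ht0 : (0:ℝ) < t := lt_trans one_pos ht1
  have hlogt : 0 < Real.log t := Real.log_pos ht1
  -- express Binv (1/Phi t)
  have hBval : Binv (1 / Phi t) = (t^2/2 + E t) ^ p := by
    rw [hBinv _ hbig]
    congr 1
    rw [div_div, Real.log_div one_ne_zero (by positivity), Real.log_one, Real.log_mul hpos.ne' hN.ne']
    simp only [hE, hg]
    ring
  have hft : t^2/2 + E t = (t^2/2) * (1 + u t) := by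
    simp only [hu]; field_simp
  have hsplit : (t^2/2 + E t) ^ p = (2:ℝ)^(-p) * t^(2/β) * (1 + u t) ^ p := by
    rw [hft, Real.mul_rpow (by positivity) (by positivity)]
    congr 1
    rw [div_eq_mul_inv, Real.mul_rpow (by positivity) (by positivity)]
    rw [← Real.rpow_natCast t 2, ← Real.rpow_mul ht0.le, ← Real.rpow_neg_one (2:ℝ),
      ← Real.rpow_mul (by norm_num : (0:ℝ) ≤ 2)]
    rw [mul_comm]
    congr 1
    · norm_num
    · push_cast; rw [hp, mul_one_div]
  have hden : t ^ (2/β - 2) = t ^ (2/β) / t^2 := by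
    rw [Real.rpow_sub ht0, Real.rpow_two]
  have hX : (0:ℝ) < t ^ (2/β) := Real.rpow_pos_of_pos ht0 _
  have hC : (0:ℝ) < (2:ℝ) ^ (-p) := Real.rpow_pos_of_pos (by norm_num) _
  have hnp : (-1/β : ℝ) = -p := by rw [hp]; ring
  rw [hBval, hsplit, hden, hnp]
  have hut : u t ≠ 0 := hupos.ne'
  have hut' : u t * t^2 = 2 * E t := by simp only [hu]; field_simp
  field_simp [hu]
  linear_combination (1 - (1 + u t)^p) * hut'
end

section
/- The function u : ℝⁿ → ℝ defined by u(x) = x₁ (the first coordinate) satisfies: u has mean value 0 and median 0 with respect to the standard Gaussian measure γₙ, |∇u| = 1 everywhere, and ∫_{ℝⁿ} e^{u²/2} dγₙ = ∞. In particular, the constant κ = 1/√2 is not attained in the Gaussian exponential-square inequality under the gradient constraint ‖∇u‖_{L^∞} ≤ 1. -/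
open MeasureTheory
open scoped ENNReal

theorem first_coordinate_extremal (n : ℕ) (hn : 1 ≤ n)
    (γ : Measure (EuclideanSpace ℝ (Fin n)))
    (hγ : γ = (volume : Measure (EuclideanSpace ℝ (Fin n))).withDensity
      (fun x => ENNReal.ofReal ((2 * Real.pi) ^ (-(n:ℝ)/2) * Real.exp (-‖x‖^2/2))))
    (u : EuclideanSpace ℝ (Fin n) → ℝ) (hu : ∀ x, u x = x ⟨0, hn⟩) :
    (∫ x, u x ∂γ) = 0 ∧
    γ {x | 0 < u x} ≤ 1/2 ∧ (1/2 : ℝ≥0∞) ≤ γ {x | 0 ≤ u x} ∧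
    (∀ x, ‖fderiv ℝ u x‖ = 1) ∧
    (∫⁻ x, ENNReal.ofReal (Real.exp ((u x)^2 / 2)) ∂γ) = ⊤ := by
  classical
  set i0 : Fin n := ⟨0, hn⟩ with hi0
  set c : ℝ := (2 * Real.pi) ^ (-(n:ℝ)/2) with hc
  have hc_pos : 0 < c := Real.rpow_pos_of_pos (by positivity) _
  set ρ : (EuclideanSpace ℝ (Fin n)) → ℝ := fun x => c * Real.exp (-‖x‖^2/2) with hρ
  have hρ_pos : ∀ x, 0 < ρ x := fun x => mul_pos hc_pos (Real.exp_pos _)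
  have hρ_cont : Continuous ρ := by
    exact continuous_const.mul (Real.continuous_exp.comp (by continuity))
  have hρ_meas : Measurable ρ := hρ_cont.measurable
  have hg_meas : Measurable (fun x : (EuclideanSpace ℝ (Fin n)) => ENNReal.ofReal (ρ x)) :=
    hρ_meas.ennreal_ofReal
  have hγ' : γ = (volume : Measure (EuclideanSpace ℝ (Fin n))).withDensity (fun x => ENNReal.ofReal (ρ x)) := hγ
  have meas_u : Measurable (fun x : (EuclideanSpace ℝ (Fin n)) => x i0) :=
    (measurable_pi_apply i0).comp (MeasurableEquiv.toLp 2 (Fin n → ℝ)).symm.measurable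
  have hu' : u = fun x : (EuclideanSpace ℝ (Fin n)) => x i0 := funext hu
  -- norm squared as a sum
  have hnormsq : ∀ x : (EuclideanSpace ℝ (Fin n)), ‖x‖^2 = ∑ i, (x i)^2 := by
    intro x
    rw [EuclideanSpace.norm_eq, Real.sq_sqrt (Finset.sum_nonneg fun i _ => sq_nonneg _)]
    simp [Real.norm_eq_abs, sq_abs]
  -- oddness lemma
  have hodd : ∀ g' : (EuclideanSpace ℝ (Fin n)) → ℝ, (∀ x, g' (-x) = - g' x) →
      ∫ x, g' x ∂(volume : Measure (EuclideanSpace ℝ (Fin n))) = 0 := by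
    intro g' h
    have h1 : ∫ x, g' (-x) ∂(volume : Measure (EuclideanSpace ℝ (Fin n))) = ∫ x, g' x ∂(volume : Measure (EuclideanSpace ℝ (Fin n))) :=
      integral_neg_eq_self g' volume
    simp_rw [h, integral_neg] at h1
    linarith
  -- mean zero
  have hmean : (∫ x, u x ∂γ) = 0 := by
    rw [hγ', hu']
    have hf_meas : Measurable (fun x : (EuclideanSpace ℝ (Fin n)) => (ρ x).toNNReal) := hρ_meas.real_toNNReal
    have : (fun x : (EuclideanSpace ℝ (Fin n)) => ENNReal.ofReal (ρ x)) = fun x => ((ρ x).toNNReal : ℝ≥0∞) := rfl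
    rw [this, integral_withDensity_eq_integral_smul hf_meas (fun x => x i0)]
    apply hodd
    intro x
    have h1 : ρ (-x) = ρ x := by simp [hρ]
    have h2 : (-x) i0 = -(x i0) := rfl
    rw [h1, h2, smul_neg]
  -- integrability of the density
  have h2 : Integrable (fun x : (EuclideanSpace ℝ (Fin n)) => Real.exp (-(1/2) * ‖x‖^2)) volume := by
    have h := (GaussianFourier.integrable_cexp_neg_mul_sq_norm_add
      (b := (1/2:ℂ)) (by norm_num) 0 (0 : (EuclideanSpace ℝ (Fin n)))).norm
    apply h.congr
    filter_upwards with v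
    rw [zero_mul, add_zero, Complex.norm_exp]
    have : (-(1/2:ℂ) * (‖v‖:ℂ)^2) = ((-(1/2)*‖v‖^2 : ℝ) : ℂ) := by push_cast; ring
    rw [this, Complex.ofReal_re]
  have hρ_eq : ρ = fun x : (EuclideanSpace ℝ (Fin n)) => c * Real.exp (-(1/2) * ‖x‖^2) := by
    funext x
    exact congrArg (c * ·) (congrArg Real.exp (by ring))
  have hρ_int : Integrable ρ volume := by
    rw [hρ_eq]; exact h2.const_mul c
  -- total mass one
  have htotal : γ Set.univ = 1 := by
    rw [hγ', withDensity_apply _ MeasurableSet.univ, Measure.restrict_univ,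
      ← ofReal_integral_eq_lintegral_ofReal hρ_int (ae_of_all _ fun x => (hρ_pos x).le)]
    have hint : ∫ x : (EuclideanSpace ℝ (Fin n)), ρ x = 1 := by
      rw [hρ_eq, integral_const_mul,
        GaussianFourier.integral_rexp_neg_mul_sq_norm (by norm_num : (0:ℝ) < 1/2)]
      rw [hc, finrank_euclideanSpace_fin]
      have : Real.pi / (1/2) = 2 * Real.pi := by ring
      rw [this, ← Real.rpow_add (by positivity)]
      have h0 : (-(n:ℝ)/2 + (n:ℝ)/2) = 0 := by ring
      rw [h0, Real.rpow_zero]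
    rw [hint, ENNReal.ofReal_one]
  -- expressions of γ of sets
  have hγs : ∀ s : Set (EuclideanSpace ℝ (Fin n)), MeasurableSet s →
      γ s = ∫⁻ x, s.indicator (fun x => ENNReal.ofReal (ρ x)) x ∂(volume : Measure (EuclideanSpace ℝ (Fin n))) := by
    intro s hs
    rw [hγ', withDensity_apply _ hs, lintegral_indicator hs]
  have hneg : ∀ F : (EuclideanSpace ℝ (Fin n)) → ℝ≥0∞,
      ∫⁻ x, F (-x) ∂(volume : Measure (EuclideanSpace ℝ (Fin n))) = ∫⁻ x, F x ∂(volume : Measure (EuclideanSpace ℝ (Fin n))) := by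
    intro F
    conv_rhs => rw [← Measure.map_neg_eq_self (volume : Measure (EuclideanSpace ℝ (Fin n)))]
    exact (lintegral_map_equiv F (MeasurableEquiv.neg (EuclideanSpace ℝ (Fin n)))).symm
  have hmeas_lt : MeasurableSet {x : (EuclideanSpace ℝ (Fin n)) | x i0 < 0} :=
    measurableSet_lt meas_u measurable_const
  have hmeas_gt : MeasurableSet {x : (EuclideanSpace ℝ (Fin n)) | 0 < x i0} :=
    measurableSet_lt measurable_const meas_u
  have hmeas_ge : MeasurableSet {x : (EuclideanSpace ℝ (Fin n)) | 0 ≤ x i0} :=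
    measurableSet_le measurable_const meas_u
  -- symmetry
  have hsym : γ {x : (EuclideanSpace ℝ (Fin n)) | x i0 < 0} = γ {x : (EuclideanSpace ℝ (Fin n)) | 0 < x i0} := by
    rw [hγs _ hmeas_lt, hγs _ hmeas_gt,
      ← hneg (fun x => Set.indicator {x : (EuclideanSpace ℝ (Fin n)) | 0 < x i0} (fun x => ENNReal.ofReal (ρ x)) x)]
    congr 1
    funext x
    have hmem : ((-x) ∈ {x : (EuclideanSpace ℝ (Fin n)) | 0 < x i0}) ↔ (x ∈ {x : (EuclideanSpace ℝ (Fin n)) | x i0 < 0}) := by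
      have h2 : (-x) i0 = -(x i0) := rfl
      simp only [Set.mem_setOf_eq, h2, neg_pos]
    have hρn : ρ (-x) = ρ x := by simp [hρ]
    by_cases hx : x ∈ {x : (EuclideanSpace ℝ (Fin n)) | x i0 < 0}
    · rw [Set.indicator_of_mem (hmem.mpr hx), Set.indicator_of_mem hx, hρn]
    · rw [Set.indicator_of_notMem (fun h => hx (hmem.mp h)), Set.indicator_of_notMem hx]
  have hsum : γ {x : (EuclideanSpace ℝ (Fin n)) | 0 < x i0} + γ {x : (EuclideanSpace ℝ (Fin n)) | x i0 < 0} ≤ 1 := by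
    have hdisj : Disjoint {x : (EuclideanSpace ℝ (Fin n)) | 0 < x i0} {x : (EuclideanSpace ℝ (Fin n)) | x i0 < 0} := by
      rw [Set.disjoint_left]
      intro x h1 h2
      simp only [Set.mem_setOf_eq] at h1 h2
      exact absurd (h1.trans h2) (lt_irrefl (0:ℝ))
    rw [← measure_union hdisj hmeas_lt]
    rw [← htotal]
    exact measure_mono (Set.subset_univ _)
  have hplus : γ {x : (EuclideanSpace ℝ (Fin n)) | 0 < x i0} ≤ 1/2 := by
    rw [hsym, ← two_mul] at hsum
    rw [ENNReal.le_div_iff_mul_le (by norm_num) (by norm_num), mul_comm]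
    exact hsum
  have hminus : γ {x : (EuclideanSpace ℝ (Fin n)) | x i0 < 0} ≤ 1/2 := by rw [hsym]; exact hplus
  have hlt_ne_top : γ {x : (EuclideanSpace ℝ (Fin n)) | x i0 < 0} ≠ ⊤ :=
    (lt_of_le_of_lt hminus (by norm_num)).ne
  have hge : (1/2 : ℝ≥0∞) ≤ γ {x : (EuclideanSpace ℝ (Fin n)) | 0 ≤ x i0} := by
    have hcompl : {x : (EuclideanSpace ℝ (Fin n)) | 0 ≤ x i0} = {x : (EuclideanSpace ℝ (Fin n)) | x i0 < 0}ᶜ := by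
      ext x; simp [not_lt]
    rw [hcompl, measure_compl hmeas_lt hlt_ne_top, htotal]
    refine ENNReal.le_sub_of_add_le_right hlt_ne_top ?_
    calc (1/2 : ℝ≥0∞) + γ {x : (EuclideanSpace ℝ (Fin n)) | x i0 < 0} ≤ 1/2 + 1/2 := by
          gcongr
      _ = 1 := ENNReal.add_halves 1
  -- fderiv
  have huproj : u = ⇑(EuclideanSpace.proj (𝕜 := ℝ) i0) := by
    funext x; rw [hu x]; rfl
  have habs : ∀ x : (EuclideanSpace ℝ (Fin n)), |x i0| ≤ ‖x‖ := by
    intro x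
    rw [EuclideanSpace.norm_eq, ← Real.sqrt_sq_eq_abs]
    apply Real.sqrt_le_sqrt
    have : (x i0)^2 = ‖x i0‖^2 := by rw [Real.norm_eq_abs, sq_abs]
    rw [this]
    exact Finset.single_le_sum (f := fun i => ‖x i‖^2) (fun i _ => sq_nonneg _)
      (Finset.mem_univ i0)
  have hnormproj : ‖(EuclideanSpace.proj i0 : EuclideanSpace ℝ (Fin n) →L[ℝ] ℝ)‖ = 1 := by
    apply le_antisymm
    · apply ContinuousLinearMap.opNorm_le_bound _ zero_le_one
      intro x
      rw [one_mul]
      simpa [Real.norm_eq_abs] using habs x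
    · have h := (EuclideanSpace.proj (𝕜 := ℝ) i0).unit_le_opNorm
        (EuclideanSpace.single i0 (1:ℝ)) (by rw [EuclideanSpace.norm_single]; simp)
      simpa [EuclideanSpace.single_apply] using h
  have hderiv : ∀ x : (EuclideanSpace ℝ (Fin n)), ‖fderiv ℝ u x‖ = 1 := by
    intro x
    rw [huproj, ContinuousLinearMap.fderiv]
    exact hnormproj
  -- infinite integral
  set T : Set (Fin n → ℝ) :=
    Set.univ.pi (fun i => if i = i0 then Set.univ else Set.Icc (-1) 1) with hT
  have hTmeas : MeasurableSet T := by
    apply MeasurableSet.univ_pi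
    intro i
    by_cases h : i = i0 <;> simp [h]
  have hTvol : volume T = ⊤ := by
    rw [hT, volume_pi_pi, ← Finset.mul_prod_erase Finset.univ _ (Finset.mem_univ i0),
      if_pos rfl, Real.volume_univ, ENNReal.top_mul]
    apply Finset.prod_ne_zero_iff.mpr
    intro i hi
    rw [if_neg (Finset.ne_of_mem_erase hi), Real.volume_Icc]
    norm_num
  set S : Set (EuclideanSpace ℝ (Fin n)) := ⇑(MeasurableEquiv.toLp 2 (Fin n → ℝ)).symm ⁻¹' T with hS
  have hSmeas : MeasurableSet S :=
    (MeasurableEquiv.toLp 2 (Fin n → ℝ)).symm.measurable hTmeas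
  have hSvol : volume S = ⊤ := by
    rw [hS, (EuclideanSpace.volume_preserving_symm_measurableEquiv_toLp (Fin n)).measure_preimage
      hTmeas.nullMeasurableSet, hTvol]
  have hSmem : ∀ x : (EuclideanSpace ℝ (Fin n)), x ∈ S → ∀ i, i ≠ i0 → |x i| ≤ 1 := by
    intro x hx i hi
    have hx' := hx
    rw [hS, Set.mem_preimage, hT, Set.mem_pi] at hx'
    have := hx' i (Set.mem_univ i)
    rw [if_neg hi] at this
    have h2 : (MeasurableEquiv.toLp 2 (Fin n → ℝ)).symm x i = x i := rfl
    rw [h2, Set.mem_Icc] at this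
    exact abs_le.mpr this
  have hεpos : (0:ℝ) < c * Real.exp (-(n:ℝ)/2) := by positivity
  have hlast : (∫⁻ x, ENNReal.ofReal (Real.exp ((u x)^2 / 2)) ∂γ) = ⊤ := by
    have hh_meas : Measurable (fun x : (EuclideanSpace ℝ (Fin n)) => ENNReal.ofReal (Real.exp ((u x)^2 / 2))) := by
      rw [hu']
      exact ((((meas_u.pow_const 2).div_const 2).exp)).ennreal_ofReal
    rw [hγ', lintegral_withDensity_eq_lintegral_mul _ hg_meas hh_meas]
    rw [eq_top_iff]
    calc (⊤ : ℝ≥0∞) = ENNReal.ofReal (c * Real.exp (-(n:ℝ)/2)) * volume S := by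
          rw [hSvol, ENNReal.mul_top (by simp [ENNReal.ofReal_eq_zero, not_le, hεpos])]
      _ = ∫⁻ x, S.indicator (fun _ => ENNReal.ofReal (c * Real.exp (-(n:ℝ)/2))) x
            ∂(volume : Measure (EuclideanSpace ℝ (Fin n))) := by
          rw [lintegral_indicator hSmeas, setLIntegral_const]
      _ ≤ ∫⁻ x, ((fun x : (EuclideanSpace ℝ (Fin n)) => ENNReal.ofReal (ρ x)) *
            fun x : (EuclideanSpace ℝ (Fin n)) => ENNReal.ofReal (Real.exp ((u x)^2 / 2))) x ∂(volume : Measure (EuclideanSpace ℝ (Fin n))) := by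
          apply lintegral_mono
          intro x
          by_cases hx : x ∈ S
          · rw [Set.indicator_of_mem hx]
            have hkey : ρ x * Real.exp ((u x)^2 / 2)
                = c * Real.exp (((x i0)^2 - ‖x‖^2)/2) := by
              rw [hρ, hu x, mul_assoc, ← Real.exp_add]
              congr 1
              ring
            have hexp : -(n:ℝ)/2 ≤ ((x i0)^2 - ‖x‖^2)/2 := by
              have hsum : ‖x‖^2 - (x i0)^2 ≤ (n:ℝ) := by
                rw [hnormsq x]
                have : ∑ i, (x i)^2 - (x i0)^2
                    = ∑ i ∈ Finset.univ.erase i0, (x i)^2 := by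
                  rw [Finset.sum_erase_eq_sub (Finset.mem_univ i0)]
                rw [this]
                calc ∑ i ∈ Finset.univ.erase i0, (x i)^2
                    ≤ (Finset.univ.erase i0).card • (1:ℝ) := by
                      apply Finset.sum_le_card_nsmul
                      intro i hi
                      have h1 := hSmem x hx i (Finset.ne_of_mem_erase hi)
                      calc (x i)^2 = |x i|^2 := (sq_abs _).symm
                        _ ≤ 1^2 := by
                            apply pow_le_pow_left₀ (abs_nonneg _) h1
                        _ = 1 := one_pow 2
                  _ = ((Finset.univ.erase i0).card : ℝ) := by simp
                  _ ≤ (n : ℝ) := by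
                      have : (Finset.univ.erase i0).card ≤ n := by
                        calc (Finset.univ.erase i0).card
                            ≤ (Finset.univ : Finset (Fin n)).card :=
                              Finset.card_le_card (Finset.erase_subset _ _)
                          _ = n := by simp
                      exact_mod_cast this
              linarith
            show ENNReal.ofReal (c * Real.exp (-(n:ℝ)/2))
              ≤ ENNReal.ofReal (ρ x) * ENNReal.ofReal (Real.exp ((u x)^2/2))
            rw [← ENNReal.ofReal_mul (hρ_pos x).le, hkey]
            apply ENNReal.ofReal_le_ofReal
            exact mul_le_mul_of_nonneg_left (Real.exp_le_exp.mpr hexp) hc_pos.le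
          · rw [Set.indicator_of_notMem hx]
            exact zero_le
  refine ⟨hmean, ?_, ?_, hderiv, hlast⟩
  · have : {x : (EuclideanSpace ℝ (Fin n)) | 0 < u x} = {x : (EuclideanSpace ℝ (Fin n)) | 0 < x i0} := by
      ext x; simp [hu x]
    rw [this]; exact hplus
  · have : {x : (EuclideanSpace ℝ (Fin n)) | 0 ≤ u x} = {x : (EuclideanSpace ℝ (Fin n)) | 0 ≤ x i0} := by
      ext x; simp [hu x]
    rw [this]; exact hge
end
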